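/- arXiv:2104.14186 — 4 statements merged into one kernel-verified Lean document; each statement's English description precedes it below -/
import Mathlib

section
/- Let B ∈ ℂ^{m×n} with m ≤ n, and let B = [Q₁, Q₂] · [[R₁₁, R₁₂],[0, R₂₂]] be a full QR factorization, where [Q₁, Q₂] ∈ ℂ^{m×m} is unitary, Q₂ ∈ ℂ^{m×ℓ} (so Q₁ ∈ ℂ^{m×(m−ℓ)}), and R₁₁ ∈ ℂ^{(m−ℓ)×(m−ℓ)}. Let V₀ ∈ ℂ^{m×k} have orthonormal columns (V₀*V₀ = I_k) with k ≤ ℓ. Then ‖V₀*Q₁‖₂ · σ_min(R₁₁) ≤ ‖V₀*B‖₂; equivalently the sine of the largest canonical angle between span(V₀) and span(Q₂), which equals ‖V₀*Q₁‖₂, is at most ‖V₀*B‖₂ / σ_min(R₁₁) whenever σ_min(R₁₁) > 0. -/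
open Matrix

/-- Spectral (L2 operator) norm of a complex matrix. -/
noncomputable def specNorm {m n : Type*} [Fintype m] [Fintype n] [DecidableEq n]
    (M : Matrix m n ℂ) : ℝ :=
  ‖LinearMap.toContinuousLinearMap (Matrix.toEuclideanLin M)‖

/-- Smallest singular value of a square complex matrix, as the infimum of `‖R v‖`
over unit vectors `v`. -/
noncomputable def sigmaMin {p : Type*} [Fintype p] [DecidableEq p]
    (R : Matrix p p ℂ) : ℝ :=
  ⨅ v : {v : EuclideanSpace ℂ p // ‖v‖ = 1}, ‖Matrix.toEuclideanLin R v.1‖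

lemma toEuclideanLin_mul' {m n o : Type*} [Fintype m] [Fintype n] [Fintype o]
    [DecidableEq n] [DecidableEq o]
    (A : Matrix m n ℂ) (B : Matrix n o ℂ) :
    Matrix.toEuclideanLin (A * B) =
      (Matrix.toEuclideanLin A).comp (Matrix.toEuclideanLin B) := by
  apply LinearMap.ext
  intro v
  simp [Matrix.toEuclideanLin_apply, Matrix.mulVec_mulVec]

lemma specNorm_nonneg {m n : Type*} [Fintype m] [Fintype n] [DecidableEq n]
    (M : Matrix m n ℂ) : 0 ≤ specNorm M := norm_nonneg _

lemma specNorm_mul_le {m n o : Type*} [Fintype m] [Fintype n] [Fintype o]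
    [DecidableEq n] [DecidableEq o]
    (A : Matrix m n ℂ) (B : Matrix n o ℂ) :
    specNorm (A * B) ≤ specNorm A * specNorm B := by
  unfold specNorm
  have h : LinearMap.toContinuousLinearMap (Matrix.toEuclideanLin (A * B)) =
      (LinearMap.toContinuousLinearMap (Matrix.toEuclideanLin A)).comp
        (LinearMap.toContinuousLinearMap (Matrix.toEuclideanLin B)) := by
    apply ContinuousLinearMap.ext
    intro v
    simp [toEuclideanLin_mul' A B]
  rw [h]
  exact ContinuousLinearMap.opNorm_comp_le _ _

lemma sigmaMin_nonneg {p : Type*} [Fintype p] [DecidableEq p]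
    (R : Matrix p p ℂ) : 0 ≤ sigmaMin R :=
  Real.iInf_nonneg fun _ => norm_nonneg _

lemma sigmaMin_le_norm {p : Type*} [Fintype p] [DecidableEq p]
    (R : Matrix p p ℂ) (v : EuclideanSpace ℂ p) (hv : ‖v‖ = 1) :
    sigmaMin R ≤ ‖Matrix.toEuclideanLin R v‖ := by
  have hbdd : BddBelow (Set.range fun v : {v : EuclideanSpace ℂ p // ‖v‖ = 1} =>
      ‖Matrix.toEuclideanLin R v.1‖) := ⟨0, by rintro x ⟨w, rfl⟩; exact norm_nonneg _⟩
  exact ciInf_le hbdd ⟨v, hv⟩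

lemma sigmaMin_mul_norm_le {p : Type*} [Fintype p] [DecidableEq p]
    (R : Matrix p p ℂ) (v : EuclideanSpace ℂ p) :
    sigmaMin R * ‖v‖ ≤ ‖Matrix.toEuclideanLin R v‖ := by
  rcases eq_or_ne v 0 with rfl | hv
  · simp
  · have hn : (0:ℝ) < ‖v‖ := norm_pos_iff.mpr hv
    have hc : ‖((‖v‖⁻¹ : ℝ) : ℂ)‖ = ‖v‖⁻¹ := by
      rw [Complex.norm_real, Real.norm_eq_abs, abs_of_pos (inv_pos.mpr hn)]
    have hu : ‖((‖v‖⁻¹ : ℝ) : ℂ) • v‖ = 1 := by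
      rw [norm_smul, hc]
      field_simp
    have h := sigmaMin_le_norm R _ hu
    rw [_root_.map_smul, norm_smul, hc] at h
    have h2 : sigmaMin R * ‖v‖ ≤ ‖v‖⁻¹ * ‖Matrix.toEuclideanLin R v‖ * ‖v‖ :=
      mul_le_mul_of_nonneg_right h (norm_nonneg v)
    calc sigmaMin R * ‖v‖ ≤ ‖v‖⁻¹ * ‖Matrix.toEuclideanLin R v‖ * ‖v‖ := h2
      _ = ‖Matrix.toEuclideanLin R v‖ := by field_simp

lemma specNorm_mul_sigmaMin_le {m p : Type*} [Fintype m] [Fintype p] [DecidableEq p]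
    (M : Matrix m p ℂ) (R : Matrix p p ℂ) :
    specNorm M * sigmaMin R ≤ specNorm (M * R) := by
  rcases eq_or_lt_of_le (sigmaMin_nonneg R) with h0 | hs
  · rw [← h0, mul_zero]
    exact specNorm_nonneg _
  · have hT : Function.Injective (Matrix.toEuclideanLin R) := by
      intro a b hab
      have h2 : Matrix.toEuclideanLin R (a - b) = 0 := by
        rw [map_sub, hab, sub_self]
      have h3 := sigmaMin_mul_norm_le R (a - b)
      rw [h2, norm_zero] at h3
      have h4 : ‖a - b‖ ≤ 0 := by nlinarith [norm_nonneg (a - b)]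
      exact sub_eq_zero.mp (norm_eq_zero.mp (le_antisymm h4 (norm_nonneg _)))
    have hSurj : Function.Surjective (Matrix.toEuclideanLin R) :=
      LinearMap.injective_iff_surjective.mp hT
    have hle : specNorm M ≤ specNorm (M * R) / sigmaMin R := by
      apply ContinuousLinearMap.opNorm_le_bound
      · exact div_nonneg (specNorm_nonneg _) hs.le
      · intro x
        obtain ⟨w, hw⟩ := hSurj x
        have h1 : ‖LinearMap.toContinuousLinearMap (Matrix.toEuclideanLin M) x‖
            = ‖LinearMap.toContinuousLinearMap (Matrix.toEuclideanLin (M * R)) w‖ := by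
          rw [← hw]
          simp [toEuclideanLin_mul']
        have h2 : ‖LinearMap.toContinuousLinearMap (Matrix.toEuclideanLin (M * R)) w‖
            ≤ specNorm (M * R) * ‖w‖ := ContinuousLinearMap.le_opNorm _ _
        have h3 : sigmaMin R * ‖w‖ ≤ ‖x‖ := by
          rw [← hw]; exact sigmaMin_mul_norm_le R w
        rw [h1]
        calc ‖LinearMap.toContinuousLinearMap (Matrix.toEuclideanLin (M * R)) w‖
            ≤ specNorm (M * R) * ‖w‖ := h2
          _ ≤ specNorm (M * R) / sigmaMin R * ‖x‖ := by
              rw [div_mul_eq_mul_div, le_div_iff₀ hs]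
              calc specNorm (M * R) * ‖w‖ * sigmaMin R
                  = specNorm (M * R) * (sigmaMin R * ‖w‖) := by ring
                _ ≤ specNorm (M * R) * ‖x‖ :=
                    mul_le_mul_of_nonneg_left h3 (specNorm_nonneg _)
    rw [← le_div_iff₀ hs]
    exact hle

lemma norm_toEuclideanLin_of_isometryCols {m n : Type*} [Fintype m] [Fintype n]
    [DecidableEq m] [DecidableEq n] (A : Matrix m n ℂ) (hA : Aᴴ * A = 1)
    (x : EuclideanSpace ℂ n) :
    ‖Matrix.toEuclideanLin A x‖ = ‖x‖ := by
  have h1 : (inner ℂ (Matrix.toEuclideanLin A x) (Matrix.toEuclideanLin A x) : ℂ)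
      = inner ℂ x x := by
    rw [← LinearMap.adjoint_inner_right,
      ← Matrix.toEuclideanLin_conjTranspose_eq_adjoint]
    have h : (Matrix.toEuclideanLin Aᴴ) ((Matrix.toEuclideanLin A) x)
        = (Matrix.toEuclideanLin (Aᴴ * A)) x := by
      rw [toEuclideanLin_mul', LinearMap.comp_apply]
    rw [h, hA]
    congr 1
    simp [Matrix.toEuclideanLin_apply]
  have h3 : ‖Matrix.toEuclideanLin A x‖ ^ 2 = ‖x‖ ^ 2 := by
    rw [← inner_self_eq_norm_sq (𝕜 := ℂ), ← inner_self_eq_norm_sq (𝕜 := ℂ), h1]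
  calc ‖Matrix.toEuclideanLin A x‖
      = Real.sqrt (‖Matrix.toEuclideanLin A x‖ ^ 2) := (Real.sqrt_sq (norm_nonneg _)).symm
    _ = Real.sqrt (‖x‖ ^ 2) := by rw [h3]
    _ = ‖x‖ := Real.sqrt_sq (norm_nonneg _)

lemma specNorm_le_one_of_isometryCols {m n : Type*} [Fintype m] [Fintype n]
    [DecidableEq m] [DecidableEq n] (A : Matrix m n ℂ) (hA : Aᴴ * A = 1) :
    specNorm A ≤ 1 := by
  apply ContinuousLinearMap.opNorm_le_bound _ zero_le_one
  intro x
  rw [one_mul]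
  exact le_of_eq (by simpa using norm_toEuclideanLin_of_isometryCols A hA x)

/-- Theorem (perturbation bound for the null space).  Let `B ∈ ℂ^{m×n}` with `m ≤ n`
(here `m = p + ℓ`, `n = p + q`, `ℓ ≤ q`) have full QR factorization
`B = [Q₁, Q₂] · [[R₁₁, R₁₂],[0, R₂₂]]` with `[Q₁, Q₂]` unitary, `Q₂ ∈ ℂ^{m×ℓ}`,
`R₁₁ ∈ ℂ^{(m−ℓ)×(m−ℓ)}`.  If `V₀ ∈ ℂ^{m×k}` has orthonormal columns and `k ≤ ℓ`, then
`‖V₀*Q₁‖₂ · σ_min(R₁₁) ≤ ‖V₀*B‖₂`; equivalently, whenever `σ_min(R₁₁) > 0`,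
the sine of the largest canonical angle between span(V₀) and span(Q₂), which equals
`‖V₀*Q₁‖₂`, is at most `‖V₀*B‖₂ / σ_min(R₁₁)`. -/
theorem stmt0 {p ℓ q k : ℕ} (hmn : ℓ ≤ q)
    (B : Matrix (Fin (p + ℓ)) (Fin p ⊕ Fin q) ℂ)
    (Q₁ : Matrix (Fin (p + ℓ)) (Fin p) ℂ) (Q₂ : Matrix (Fin (p + ℓ)) (Fin ℓ) ℂ)
    (R₁₁ : Matrix (Fin p) (Fin p) ℂ) (R₁₂ : Matrix (Fin p) (Fin q) ℂ)
    (R₂₂ : Matrix (Fin ℓ) (Fin q) ℂ)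
    (hQunit : (fromCols Q₁ Q₂)ᴴ * fromCols Q₁ Q₂ = 1 ∧
      fromCols Q₁ Q₂ * (fromCols Q₁ Q₂)ᴴ = 1)
    (hB : B = fromCols Q₁ Q₂ * fromBlocks R₁₁ R₁₂ 0 R₂₂)
    (V₀ : Matrix (Fin (p + ℓ)) (Fin k) ℂ) (hV₀ : V₀ᴴ * V₀ = 1) (hk : k ≤ ℓ) :
    specNorm (V₀ᴴ * Q₁) * sigmaMin R₁₁ ≤ specNorm (V₀ᴴ * B) ∧
      (0 < sigmaMin R₁₁ →
        specNorm (V₀ᴴ * Q₁) ≤ specNorm (V₀ᴴ * B) / sigmaMin R₁₁) := by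
  set E : Matrix (Fin p ⊕ Fin q) (Fin p) ℂ := fromRows 1 0 with hE
  have hEiso : Eᴴ * E = 1 := by
    rw [hE, conjTranspose_fromRows_eq_fromCols_conjTranspose,
      fromCols_mul_fromRows]
    simp
  have hkey : V₀ᴴ * Q₁ * R₁₁ = (V₀ᴴ * B) * E := by
    rw [hB, hE]
    rw [fromCols_mul_fromBlocks]
    rw [Matrix.mul_assoc, mul_fromCols, fromCols_mul_fromRows]
    simp [Matrix.mul_assoc]
  have h1 : specNorm (V₀ᴴ * Q₁) * sigmaMin R₁₁ ≤ specNorm (V₀ᴴ * Q₁ * R₁₁) :=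
    specNorm_mul_sigmaMin_le _ _
  have h2 : specNorm (V₀ᴴ * Q₁ * R₁₁) ≤ specNorm (V₀ᴴ * B) := by
    rw [hkey]
    calc specNorm ((V₀ᴴ * B) * E) ≤ specNorm (V₀ᴴ * B) * specNorm E :=
          specNorm_mul_le _ _
      _ ≤ specNorm (V₀ᴴ * B) * 1 :=
          mul_le_mul_of_nonneg_left (specNorm_le_one_of_isometryCols E hEiso)
            (specNorm_nonneg _)
      _ = specNorm (V₀ᴴ * B) := mul_one _
  refine ⟨le_trans h1 h2, fun hs => ?_⟩
  rw [le_div_iff₀ hs]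
  exact le_trans h1 h2
end

section
/- Let X ∈ ℂ^{m×n} and c > 0, and let [cX; I_n] = [Q₁; Q₂] R be a thin QR factorization of the (m+n)×n stacked matrix, where Q₁ ∈ ℂ^{m×n}, Q₂ ∈ ℂ^{n×n}, [Q₁; Q₂] has orthonormal columns (Q₁*Q₁ + Q₂*Q₂ = I_n), and R ∈ ℂ^{n×n} is invertible. Then c X (I_n + c² X* X)^{−1} = Q₁ Q₂*. -/
open Matrix

/-- Let `X ∈ ℂ^{m×n}` and `c > 0`, and let `[cX; I] = [Q₁; Q₂] R` be a thin QR
factorization of the stacked matrix (`Q₁*Q₁ + Q₂*Q₂ = I`, `R` invertible).  Then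
`c X (I + c² X* X)⁻¹ = Q₁ Q₂*`. -/
theorem stmt7 {m n : ℕ} (X : Matrix (Fin m) (Fin n) ℂ) (c : ℝ) (hc : 0 < c)
    (Q₁ : Matrix (Fin m) (Fin n) ℂ) (Q₂ R : Matrix (Fin n) (Fin n) ℂ)
    (hQR : Matrix.fromRows ((c : ℂ) • X) (1 : Matrix (Fin n) (Fin n) ℂ) =
      Matrix.fromRows Q₁ Q₂ * R)
    (hQ : Q₁ᴴ * Q₁ + Q₂ᴴ * Q₂ = 1) (hR : IsUnit R) :
    (c : ℂ) • (X * (1 + ((c : ℂ) ^ 2) • (Xᴴ * X))⁻¹) = Q₁ * Q₂ᴴ := by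
  rw [Matrix.fromRows_mul, Matrix.fromRows_ext_iff] at hQR
  obtain ⟨h1, h2⟩ := hQR
  have hRdet : IsUnit R.det := (Matrix.isUnit_iff_isUnit_det R).mp hR
  have hQ₂ : Q₂ = R⁻¹ := (Matrix.inv_eq_left_inv h2.symm).symm
  have hQ₁ : Q₁ = (c : ℂ) • X * R⁻¹ := by
    have := congrArg (· * R⁻¹) h1
    simpa [Matrix.mul_assoc, Matrix.mul_nonsing_inv R hRdet] using this.symm
  have key : (1 : Matrix (Fin n) (Fin n) ℂ) + ((c : ℂ) ^ 2) • (Xᴴ * X) = Rᴴ * R := by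
    have := congrArg (fun M => Rᴴ * M * R) hQ
    have hconj : ((c : ℂ) • X)ᴴ = (c : ℂ) • Xᴴ := by
      simp [Matrix.conjTranspose_smul, Complex.conj_ofReal]
    calc (1 : Matrix (Fin n) (Fin n) ℂ) + ((c : ℂ) ^ 2) • (Xᴴ * X)
        = ((c : ℂ) • X)ᴴ * ((c : ℂ) • X) + 1 := by
          rw [hconj]
          rw [Matrix.smul_mul, Matrix.mul_smul, smul_smul]
          ring_nf
          rw [add_comm]
      _ = (Q₁ * R)ᴴ * (Q₁ * R) + (Q₂ * R)ᴴ * (Q₂ * R) := by rw [← h1, ← h2]; simp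
      _ = Rᴴ * (Q₁ᴴ * Q₁ + Q₂ᴴ * Q₂) * R := by
          simp [Matrix.conjTranspose_mul, Matrix.mul_assoc, Matrix.mul_add,
            Matrix.add_mul]
      _ = Rᴴ * R := by rw [hQ]; simp
  have hRH : IsUnit (Rᴴ).det := by
    rw [Matrix.det_conjTranspose]
    exact (isUnit_star).mpr hRdet
  rw [key, Matrix.mul_inv_rev, hQ₁, hQ₂, Matrix.conjTranspose_nonsing_inv]
  rw [Matrix.smul_mul, Matrix.smul_mul, Matrix.mul_assoc]
end

section
/- Let X ∈ ℂ^{m×n}, let a, b, c be real scalars with c > 0, and let [√c · X; I_n] = [Q₁; Q₂] R be a thin QR factorization with Q₁ ∈ ℂ^{m×n}, Q₂ ∈ ℂ^{n×n}, Q₁*Q₁ + Q₂*Q₂ = I_n, and R ∈ ℂ^{n×n} invertible. Then (b/c) X + (1/√c)(a − b/c) Q₁ Q₂* = X (a I_n + b X* X)(I_n + c X* X)^{−1}; that is, the QR-based (inverse-free) QDWH update formula produces the same matrix as the dynamically weighted Halley iteration X ↦ X(aI + bX*X)(I + cX*X)^{−1}. -/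
open Matrix

/-- QR-based (inverse-free) QDWH update: for `X ∈ ℂ^{m×n}`, real `a, b, c` with `c > 0`,
and a thin QR factorization `[√c·X; I] = [Q₁; Q₂] R` (`Q₁*Q₁ + Q₂*Q₂ = I`, `R` invertible),
`(b/c) X + (1/√c)(a − b/c) Q₁ Q₂* = X (a I + b X* X)(I + c X* X)⁻¹`. -/
theorem stmt8 {m n : ℕ} (X : Matrix (Fin m) (Fin n) ℂ) (a b c : ℝ) (hc : 0 < c)
    (Q₁ : Matrix (Fin m) (Fin n) ℂ) (Q₂ R : Matrix (Fin n) (Fin n) ℂ)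
    (hQR : Matrix.fromRows (((Real.sqrt c : ℝ) : ℂ) • X)
        (1 : Matrix (Fin n) (Fin n) ℂ) = Matrix.fromRows Q₁ Q₂ * R)
    (hQ : Q₁ᴴ * Q₁ + Q₂ᴴ * Q₂ = 1) (hR : IsUnit R) :
    ((b / c : ℝ) : ℂ) • X +
        ((1 / Real.sqrt c * (a - b / c) : ℝ) : ℂ) • (Q₁ * Q₂ᴴ) =
      X * ((a : ℂ) • (1 : Matrix (Fin n) (Fin n) ℂ) + (b : ℂ) • (Xᴴ * X)) *
        (1 + (c : ℂ) • (Xᴴ * X))⁻¹ := by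
  have hcC : (c : ℂ) ≠ 0 := by exact_mod_cast hc.ne'
  have hsc : Real.sqrt c ≠ 0 := by positivity
  have hRdet : IsUnit R.det := (Matrix.isUnit_iff_isUnit_det R).mp hR
  -- extract the two block equations
  have h1 : ((Real.sqrt c : ℝ) : ℂ) • X = Q₁ * R := by
    ext i j
    have := congrFun (congrFun hQR (Sum.inl i)) j
    simpa [Matrix.mul_apply] using this
  have h2 : (1 : Matrix (Fin n) (Fin n) ℂ) = Q₂ * R := by
    ext i j
    have := congrFun (congrFun hQR (Sum.inr i)) j
    simpa [Matrix.mul_apply] using this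
  set M : Matrix (Fin n) (Fin n) ℂ := 1 + (c : ℂ) • (Xᴴ * X) with hMdef
  -- R* R = M
  have hM : Rᴴ * R = M := by
    have : Rᴴ * R = Rᴴ * (Q₁ᴴ * Q₁ + Q₂ᴴ * Q₂) * R := by rw [hQ]; simp
    rw [this]
    have expand : Rᴴ * (Q₁ᴴ * Q₁ + Q₂ᴴ * Q₂) * R
        = (Q₁ * R)ᴴ * (Q₁ * R) + (Q₂ * R)ᴴ * (Q₂ * R) := by
      simp [Matrix.conjTranspose_mul, Matrix.mul_add, Matrix.add_mul, Matrix.mul_assoc]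
    rw [expand, ← h1, ← h2]
    simp [Matrix.conjTranspose_smul, Matrix.smul_mul, Matrix.mul_smul, smul_smul, hMdef]
    rw [Real.mul_self_sqrt hc.le, add_comm]
  have hMunit : IsUnit M := by
    rw [← hM]
    exact ((Matrix.isUnit_conjTranspose R).mpr hR).mul hR
  have hMdetunit : IsUnit M.det := (Matrix.isUnit_iff_isUnit_det M).mp hMunit
  have hMinv : M⁻¹ = R⁻¹ * (Rᴴ)⁻¹ := by
    rw [← hM, Matrix.mul_inv_rev]
  -- identify Q₂ and Q₁
  have hQ2 : Q₂ = R⁻¹ := (Matrix.inv_eq_left_inv h2.symm).symm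
  have hQ1 : Q₁ = ((Real.sqrt c : ℝ) : ℂ) • (X * R⁻¹) := by
    have := congrArg (fun A => A * R⁻¹) h1
    simpa [Matrix.mul_assoc, Matrix.mul_nonsing_inv R hRdet, Matrix.smul_mul] using this.symm
  have hQQ : Q₁ * Q₂ᴴ = ((Real.sqrt c : ℝ) : ℂ) • (X * M⁻¹) := by
    rw [hQ1, hQ2, hMinv, Matrix.conjTranspose_nonsing_inv]
    simp [Matrix.smul_mul, Matrix.mul_assoc]
  -- rewrite the numerator polynomial
  have hnum : (a : ℂ) • (1 : Matrix (Fin n) (Fin n) ℂ) + (b : ℂ) • (Xᴴ * X)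
      = ((b / c : ℝ) : ℂ) • M + (((a - b / c : ℝ)) : ℂ) • (1 : Matrix (Fin n) (Fin n) ℂ) := by
    rw [hMdef, smul_add, smul_smul]
    push_cast
    rw [div_mul_cancel₀ (b : ℂ) hcC]
    module
  have hMM : M * M⁻¹ = 1 := Matrix.mul_nonsing_inv M hMdetunit
  rw [hQQ, hnum, smul_smul]
  have hcoef : (((1 / Real.sqrt c * (a - b / c) : ℝ)) : ℂ) * ((Real.sqrt c : ℝ) : ℂ)
      = (((a - b / c : ℝ)) : ℂ) := by
    have h : (1 / Real.sqrt c * (a - b / c)) * Real.sqrt c = a - b / c := by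
      field_simp
    rw [← Complex.ofReal_mul, h]
  rw [hcoef]
  rw [Matrix.mul_add, Matrix.add_mul]
  congr 1
  · rw [Matrix.mul_smul, Matrix.smul_mul, Matrix.mul_assoc, hMM, Matrix.mul_one]
  · rw [Matrix.mul_smul, Matrix.smul_mul, Matrix.mul_one]
end

section
/- Let X ∈ ℂ^{m×n}, let a, b, c be real scalars with c > 0, set Z = I_n + c X* X, and let W ∈ ℂ^{n×n} be any invertible matrix with W* W = Z (e.g., the Cholesky factor of the Hermitian positive definite matrix Z). Then (b/c) X + (a − b/c)(X W^{−1}) W^{−*} = X (a I_n + b X* X)(I_n + c X* X)^{−1}; that is, the Cholesky-based QDWH update formula produces the same matrix as the dynamically weighted Halley iteration. -/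
open Matrix

/-- Cholesky-based QDWH update: for `X ∈ ℂ^{m×n}`, real `a, b, c` with `c > 0`,
`Z = I + c X* X`, and any invertible `W` with `W* W = Z`,
`(b/c) X + (a − b/c)(X W⁻¹) W⁻* = X (a I + b X* X)(I + c X* X)⁻¹`. -/
theorem stmt9 {m n : ℕ} (X : Matrix (Fin m) (Fin n) ℂ) (a b c : ℝ) (hc : 0 < c)
    (Z W : Matrix (Fin n) (Fin n) ℂ)
    (hZ : Z = 1 + (c : ℂ) • (Xᴴ * X))
    (hW : IsUnit W) (hWZ : Wᴴ * W = Z) :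
    ((b / c : ℝ) : ℂ) • X + ((a - b / c : ℝ) : ℂ) • (X * W⁻¹ * (W⁻¹)ᴴ) =
      X * ((a : ℂ) • (1 : Matrix (Fin n) (Fin n) ℂ) + (b : ℂ) • (Xᴴ * X)) *
        (1 + (c : ℂ) • (Xᴴ * X))⁻¹ := by
  have hc0 : (c : ℂ) ≠ 0 := by exact_mod_cast hc.ne'
  have hWH : IsUnit Wᴴ := by
    rw [Matrix.isUnit_iff_isUnit_det] at hW ⊢
    rw [Matrix.det_conjTranspose]
    exact hW.star
  have hZu : IsUnit Z := by rw [← hWZ]; exact hWH.mul hW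
  have hinv : W⁻¹ * (W⁻¹)ᴴ = Z⁻¹ := by
    rw [← hWZ, Matrix.mul_inv_rev, Matrix.conjTranspose_nonsing_inv]
  have key : (a : ℂ) • (1 : Matrix (Fin n) (Fin n) ℂ) + (b : ℂ) • (Xᴴ * X) =
      ((b / c : ℝ) : ℂ) • Z + ((a - b / c : ℝ) : ℂ) • 1 := by
    rw [hZ]
    push_cast
    rw [smul_add, smul_smul, div_mul_cancel₀ _ hc0]
    module
  rw [← hZ, Matrix.mul_assoc X W⁻¹, hinv, key]
  rw [Matrix.mul_add, Matrix.add_mul]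
  simp [Matrix.mul_smul, Matrix.smul_mul, Matrix.mul_assoc,
    Matrix.mul_nonsing_inv _ ((Matrix.isUnit_iff_isUnit_det Z).mp hZu)]
end
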